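/- Let h : ℝ² → ℝ be continuously differentiable with M := sup_{ℝ²}(|h| + |∇h|) < ∞ and h ≥ 3/4 everywhere. Then there exists r₀ > 0 such that for every r with 0 < r ≤ r₀ there exist δ > 0 and δ' > 0 such that the function H(y) := (r⁴/|y|⁴) h(r² y/|y|²), defined for y ≠ 0, satisfies ∂H/∂y₁ (y) < 0 at every point y = (y₁,y₂) with r/(1+δ) ≤ |y| ≤ r, y₁ > 0 and |y₂| ≤ δ'. In other words, the weight h transported by the Kelvin inversion y ↦ r²y/|y|² and multiplied by the conformal factor r⁴/|y|⁴ is strictly decreasing in the y₁-direction in a thin annular sector near the point (r,0). -/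

import Mathlib

open Real Filter Topology
open RealInnerProductSpace
set_option maxHeartbeats 1000000

/-- The weight transported by the Kelvin inversion `y ↦ r² y/|y|²` and
multiplied by the conformal factor `r⁴/|y|⁴`. -/
noncomputable def kelvinWeight (r : ℝ) (h : EuclideanSpace ℝ (Fin 2) → ℝ)
    (y : EuclideanSpace ℝ (Fin 2)) : ℝ :=
  (r^4 / ‖y‖^4) * h ((r^2 / ‖y‖^2) • y)

theorem kelvin_fderiv_apply (r : ℝ) (h : EuclideanSpace ℝ (Fin 2) → ℝ) (hC1 : ContDiff ℝ 1 h)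
    (y : EuclideanSpace ℝ (Fin 2)) (hy : y ≠ 0) (v : EuclideanSpace ℝ (Fin 2)) :
    fderiv ℝ (kelvinWeight r h) y v =
      (-(4 * r^4 * ((‖y‖^2)⁻¹)^3 * ⟪y, v⟫)) * h ((r^2 / ‖y‖^2) • y)
      + (r^4 * (‖y‖^2)⁻¹ * (‖y‖^2)⁻¹) *
        fderiv ℝ h ((r^2 / ‖y‖^2) • y)
          ((-(2 * r^2 * ((‖y‖^2)⁻¹)^2 * ⟪y, v⟫)) • y + (r^2 * (‖y‖^2)⁻¹) • v) := by
  have hn0 : (⟪y, y⟫ : ℝ) ≠ 0 := by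
    rw [real_inner_self_eq_norm_sq]
    exact pow_ne_zero 2 (norm_ne_zero_iff.mpr hy)
  have hid : HasFDerivAt (fun z : EuclideanSpace ℝ (Fin 2) => z)
      (ContinuousLinearMap.id ℝ _) y := hasFDerivAt_id y
  have hn : HasFDerivAt (fun z : EuclideanSpace ℝ (Fin 2) => (⟪z, z⟫ : ℝ))
      ((fderivInnerCLM ℝ (y, y)).comp
        ((ContinuousLinearMap.id ℝ _).prod (ContinuousLinearMap.id ℝ _))) y :=
    hid.inner ℝ hid
  set N := (fderivInnerCLM ℝ (y, y)).comp
      ((ContinuousLinearMap.id ℝ (EuclideanSpace ℝ (Fin 2))).prod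
        (ContinuousLinearMap.id ℝ _)) with hN
  have hg1 : HasDerivAt (fun s : ℝ => r^2 * s⁻¹) (r^2 * (-((⟪y, y⟫:ℝ)^2)⁻¹)) (⟪y, y⟫ : ℝ) :=
    (hasDerivAt_inv hn0).const_mul _
  have hc : HasFDerivAt (fun z : EuclideanSpace ℝ (Fin 2) => r^2 * (⟪z, z⟫ : ℝ)⁻¹)
      ((r^2 * (-((⟪y, y⟫:ℝ)^2)⁻¹)) • N) y := hg1.comp_hasFDerivAt_of_eq y hn rfl
  have hA : HasFDerivAt (fun z : EuclideanSpace ℝ (Fin 2) => (r^2 * (⟪z, z⟫ : ℝ)⁻¹) • z)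
      ((r^2 * (⟪y, y⟫ : ℝ)⁻¹) • ContinuousLinearMap.id ℝ _
        + ((r^2 * (-((⟪y, y⟫:ℝ)^2)⁻¹)) • N).smulRight y) y := hc.smul hid
  have hh : HasFDerivAt h (fderiv ℝ h ((r^2 * (⟪y, y⟫ : ℝ)⁻¹) • y))
      ((r^2 * (⟪y, y⟫ : ℝ)⁻¹) • y) :=
    (hC1.differentiable one_ne_zero _).hasFDerivAt
  have hcomp : HasFDerivAt (fun z : EuclideanSpace ℝ (Fin 2) => h ((r^2 * (⟪z, z⟫ : ℝ)⁻¹) • z))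
      ((fderiv ℝ h ((r^2 * (⟪y, y⟫ : ℝ)⁻¹) • y)).comp
        ((r^2 * (⟪y, y⟫ : ℝ)⁻¹) • ContinuousLinearMap.id ℝ _
          + ((r^2 * (-((⟪y, y⟫:ℝ)^2)⁻¹)) • N).smulRight y)) y :=
    HasFDerivAt.comp y ((hC1.differentiable one_ne_zero _).hasFDerivAt) hA
  have hg2 : HasDerivAt (fun s : ℝ => r^4 * s⁻¹ * s⁻¹)
      ((r^4 * (-((⟪y, y⟫:ℝ)^2)⁻¹)) * (⟪y, y⟫:ℝ)⁻¹ + (r^4 * (⟪y, y⟫:ℝ)⁻¹) * (-((⟪y, y⟫:ℝ)^2)⁻¹))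
      (⟪y, y⟫ : ℝ) := ((hasDerivAt_inv hn0).const_mul (r^4)).mul (hasDerivAt_inv hn0)
  have hg : HasFDerivAt (fun z : EuclideanSpace ℝ (Fin 2) => r^4 * (⟪z, z⟫ : ℝ)⁻¹ * (⟪z, z⟫ : ℝ)⁻¹)
      (((r^4 * (-((⟪y, y⟫:ℝ)^2)⁻¹)) * (⟪y, y⟫:ℝ)⁻¹
        + (r^4 * (⟪y, y⟫:ℝ)⁻¹) * (-((⟪y, y⟫:ℝ)^2)⁻¹)) • N) y := hg2.comp_hasFDerivAt_of_eq y hn rfl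
  have hF := hg.fun_mul hcomp
  have hfun : kelvinWeight r h = fun z : EuclideanSpace ℝ (Fin 2) =>
      (r^4 * (⟪z, z⟫ : ℝ)⁻¹ * (⟪z, z⟫ : ℝ)⁻¹) * h ((r^2 * (⟪z, z⟫ : ℝ)⁻¹) • z) := by
    funext z
    rw [real_inner_self_eq_norm_sq]
    simp only [kelvinWeight, div_eq_mul_inv]
    rw [show ‖z‖^4 = ‖z‖^2 * ‖z‖^2 by ring, mul_inv]
    ring
  rw [hfun, hF.fderiv]
  simp only [ContinuousLinearMap.add_apply, ContinuousLinearMap.smul_apply,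
    ContinuousLinearMap.comp_apply, ContinuousLinearMap.coe_smul', Pi.smul_apply,
    ContinuousLinearMap.smulRight_apply, ContinuousLinearMap.prod_apply,
    ContinuousLinearMap.id_apply, fderivInnerCLM_apply, hN,
    real_inner_self_eq_norm_sq, smul_eq_mul]
  rw [real_inner_comm v y]
  have harg : (r^2 * ((‖y‖^2 : ℝ))⁻¹) • y = (r^2 / ‖y‖^2) • y := by rw [div_eq_mul_inv]
  rw [harg]
  have e2 : (r^2 * ((‖y‖^2:ℝ))⁻¹) • v + (r^2 * -(((‖y‖^2:ℝ))^2)⁻¹ * ((⟪v, y⟫:ℝ) + ⟪v, y⟫)) • y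
      = (-(2 * r^2 * (((‖y‖^2:ℝ))⁻¹)^2 * (⟪v, y⟫:ℝ))) • y + (r^2 * ((‖y‖^2:ℝ))⁻¹) • v := by
    rw [add_comm]
    congr 1
    congr 1
    ring
  rw [e2]
  ring

/-- If `h` is `C¹`, bounded together with its gradient, and `h ≥ 3/4`,
then for all sufficiently small `r > 0` the transported weight
`H(y) = (r⁴/|y|⁴) h(r² y/|y|²)` is strictly decreasing in the `y₁`-direction
in a thin annular sector near the point `(r,0)`. -/
theorem kelvinWeight_decreasing
    (h : EuclideanSpace ℝ (Fin 2) → ℝ) (hC1 : ContDiff ℝ 1 h)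
    (M : ℝ) (hM : ∀ x, |h x| + ‖fderiv ℝ h x‖ ≤ M)
    (hpos : ∀ x, 3/4 ≤ h x) :
    ∃ r₀ > 0, ∀ r : ℝ, 0 < r → r ≤ r₀ →
      ∃ δ > 0, ∃ δ' > 0, ∀ y : EuclideanSpace ℝ (Fin 2),
        y ≠ 0 → r / (1 + δ) ≤ ‖y‖ → ‖y‖ ≤ r → 0 < y 0 → |y 1| ≤ δ' →
          fderiv ℝ (kelvinWeight r h) y (EuclideanSpace.single 0 1) < 0 := by
  have hM34 : (3:ℝ)/4 ≤ M := by
    have h1 := hM 0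
    have h2 := hpos 0
    have h3 : h 0 ≤ |h 0| := le_abs_self _
    have h4 : (0:ℝ) ≤ ‖fderiv ℝ h 0‖ := norm_nonneg _
    linarith
  have hMpos : (0:ℝ) < M := by linarith
  refine ⟨(3*M)⁻¹, by positivity, fun r hr hrle => ⟨1, one_pos, r/3, by positivity, fun y hy0 hlow hup hy1 hy2 => ?_⟩⟩
  set v : EuclideanSpace ℝ (Fin 2) := EuclideanSpace.single 0 1 with hv
  have hvnorm : ‖v‖ = 1 := by simp [hv, EuclideanSpace.norm_single]
  have hinner : (⟪y, v⟫ : ℝ) = y 0 := by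
    simp [hv, EuclideanSpace.inner_single_right]
  rw [kelvin_fderiv_apply r h hC1 y hy0 v, hinner]
  set s := ‖y‖ with hs
  have hspos : 0 < s := norm_pos_iff.mpr hy0
  have hslow : r/2 ≤ s := by
    have : r / (1+1) = r/2 := by norm_num
    rw [← this]; exact hlow
  have hy0les : y 0 ≤ s := by
    have h1 : (⟪y, v⟫ : ℝ) ≤ ‖y‖ * ‖v‖ := real_inner_le_norm y v
    rw [hinner, hvnorm, mul_one] at h1
    exact h1
  have hns : s^2 = y 0 * y 0 + y 1 * y 1 := by
    rw [hs, ← real_inner_self_eq_norm_sq]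
    rw [real_inner_self_eq_norm_sq, EuclideanSpace.norm_eq, Real.sq_sqrt (by positivity), Fin.sum_univ_two,
      Real.norm_eq_abs, Real.norm_eq_abs, sq_abs, sq_abs]; ring
  -- y 0 > r/3
  have hy1sq : y 1 * y 1 ≤ (r/3)^2 := by
    have := abs_le.mp hy2
    nlinarith
  have hy0gt : r/3 < y 0 := by
    nlinarith [sq_nonneg (y 0 - r/3), sq_nonneg s, hslow, hspos]
  -- bound on the gradient term
  set x := (r^2 / s^2) • y with hx
  have hφ : ‖fderiv ℝ h x‖ ≤ M := by
    have h1 := hM x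
    have h2 : (0:ℝ) ≤ |h x| := abs_nonneg _
    linarith
  set w := (-(2 * r^2 * ((s^2)⁻¹)^2 * y 0)) • y + (r^2 * (s^2)⁻¹) • v with hw
  have hwnorm : ‖w‖ ≤ 3 * r^2 * (s^2)⁻¹ := by
    have h1 : ‖w‖ ≤ ‖(-(2 * r^2 * ((s^2)⁻¹)^2 * y 0)) • y‖ + ‖(r^2 * (s^2)⁻¹) • v‖ :=
      norm_add_le _ _
    rw [norm_smul, norm_smul, hvnorm, Real.norm_eq_abs, Real.norm_eq_abs, ← hs] at h1
    have h2 : |(-(2 * r^2 * ((s^2)⁻¹)^2 * y 0))| = 2 * r^2 * ((s^2)⁻¹) ^ 2 * y 0 := by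
      rw [abs_neg, abs_of_nonneg]; positivity
    have h3 : |r^2 * (s^2)⁻¹| = r^2 * (s^2)⁻¹ := by
      rw [abs_of_nonneg]; positivity
    rw [h2, h3] at h1
    have h4 : 2 * r^2 * ((s^2)⁻¹) ^ 2 * y 0 * s ≤ 2 * r^2 * (s^2)⁻¹ := by
      have e : (2:ℝ) * r^2 * (s^2)⁻¹ = 2 * r^2 * ((s^2)⁻¹) ^ 2 * s * s := by
        field_simp
      rw [e]
      have hys : y 0 * s ≤ s * s := by nlinarith
      nlinarith [mul_le_mul_of_nonneg_left hys (show (0:ℝ) ≤ 2*r^2*((s^2)⁻¹)^2 by positivity)]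
    nlinarith
  have hBval : fderiv ℝ h x w ≤ M * (3 * r^2 * (s^2)⁻¹) := by
    calc fderiv ℝ h x w ≤ ‖fderiv ℝ h x w‖ := le_abs_self _
      _ ≤ ‖fderiv ℝ h x‖ * ‖w‖ := (fderiv ℝ h x).le_opNorm w
      _ ≤ M * (3 * r^2 * (s^2)⁻¹) := by
          apply mul_le_mul hφ hwnorm (norm_nonneg _) (le_of_lt hMpos)
  have hhx : 3/4 ≤ h x := hpos x
  -- combine
  have hsinv : (0:ℝ) < (s^2)⁻¹ := by positivity
  have hMr : 3 * M * r^2 ≤ r := by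
    have h1 : r * (3*M) ≤ (3*M)⁻¹ * (3*M) :=
      mul_le_mul_of_nonneg_right hrle (by positivity)
    rw [inv_mul_cancel₀ (by positivity : (3*M:ℝ) ≠ 0)] at h1
    nlinarith
  have key : -(4 * r^4 * ((s^2)⁻¹)^3 * y 0) * h x + (r^4 * (s^2)⁻¹ * (s^2)⁻¹) * fderiv ℝ h x w < 0 := by
    have t1 : -(4 * r^4 * ((s^2)⁻¹)^3 * y 0) * h x ≤ -(3 * r^4 * ((s^2)⁻¹)^3 * y 0) := by
      have c : 0 < 4 * r^4 * ((s^2)⁻¹)^3 * y 0 := by positivity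
      nlinarith
    have t2 : (r^4 * (s^2)⁻¹ * (s^2)⁻¹) * fderiv ℝ h x w ≤ 3 * M * r^6 * ((s^2)⁻¹)^3 := by
      have c : (0:ℝ) ≤ r^4 * (s^2)⁻¹ * (s^2)⁻¹ := by positivity
      calc (r^4 * (s^2)⁻¹ * (s^2)⁻¹) * fderiv ℝ h x w
          ≤ (r^4 * (s^2)⁻¹ * (s^2)⁻¹) * (M * (3 * r^2 * (s^2)⁻¹)) := by
            exact mul_le_mul_of_nonneg_left hBval c
        _ = 3 * M * r^6 * ((s^2)⁻¹)^3 := by ring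
    have t3 : 3 * M * r^6 * ((s^2)⁻¹)^3 < 3 * r^4 * ((s^2)⁻¹)^3 * y 0 := by
      have c : (0:ℝ) < r^4 * ((s^2)⁻¹)^3 := by positivity
      have : M * r^2 < y 0 := by nlinarith
      nlinarith
    linarith
  exact key
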